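/- If p is a complex polynomial of degree n ≥ 1 all of whose roots lie in the closed unit disk D = {z : |z| ≤ 1}, then sup_{|z|≤1} |p'(z)| ≥ (n/2) · sup_{|z|≤1} |p(z)|. -/

import Mathlib

open Polynomial Metric

-- pointwise key lemma
lemma half_le_re (z r : ℂ) (hz : ‖z‖ = 1) (hr : ‖r‖ ≤ 1)
    (hne : z - r ≠ 0) : (1:ℝ)/2 ≤ (z * (z - r)⁻¹).re := by
  have hz2 : z.re ^ 2 + z.im ^ 2 = 1 := by
    have := Complex.sq_norm z
    rw [hz] at this
    simpa [Complex.normSq_apply, sq] using this.symm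
  have hr2 : r.re ^ 2 + r.im ^ 2 ≤ 1 := by
    have h1 := Complex.sq_norm r
    have h2 : (‖r‖) ^ 2 ≤ 1 := by nlinarith [norm_nonneg r]
    rw [h1] at h2
    simpa [Complex.normSq_apply, sq] using h2
  have hd : 0 < Complex.normSq (z - r) := Complex.normSq_pos.2 hne
  rw [Complex.normSq_apply] at hd
  simp only [Complex.mul_re, Complex.inv_re, Complex.inv_im, Complex.sub_re, Complex.sub_im,
    Complex.normSq_apply] at *
  rw [mul_div_assoc' , mul_div_assoc', ← sub_div, div_le_div_iff₀ (by norm_num) hd] at *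
  nlinarith [hd, hz2, hr2]

lemma log_deriv (p : Polynomial ℂ) (z : ℂ) (hz : p.eval z ≠ 0) :
    (derivative p).eval z = p.eval z * (p.roots.map (fun r => (z - r)⁻¹)).sum := by
  classical
  have hfac := Splits.eq_prod_roots (f := p) (IsAlgClosed.splits p)
  set s := p.roots with hs
  have hp : p ≠ 0 := fun h => hz (by simp [h])
  have hevalfac : p.eval z = p.leadingCoeff * (s.map (fun x => z - x)).prod := by
    conv_lhs => rw [hfac]
    simp [eval_multiset_prod, Multiset.map_map, Function.comp]
  have hne : ∀ r ∈ s, z - r ≠ 0 := by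
    intro r hr h0
    have hzr : z = r := sub_eq_zero.1 h0
    exact hz (hzr ▸ isRoot_of_mem_roots hr)
  set P : ℂ := (s.map (fun x => z - x)).prod with hP
  have key : ∀ r ∈ s, ((s.erase r).map (fun x => z - x)).prod = P * (z - r)⁻¹ := by
    intro r hr
    have h1 : (z - r) * ((s.erase r).map (fun x => z - x)).prod = P :=
      Multiset.prod_map_erase (f := fun x => z - x) hr
    field_simp [hne r hr]
    linear_combination h1
  conv_lhs => rw [hfac]
  rw [derivative_mul, derivative_C, zero_mul, zero_add, eval_mul, eval_C,
    derivative_prod]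
  have hev : eval z (Multiset.map (fun i => (Multiset.map (fun a => X - C a) (s.erase i)).prod * derivative (X - C i)) s).sum = (Multiset.map ((evalRingHom z) ∘ fun i => (Multiset.map (fun a => X - C a) (s.erase i)).prod * derivative (X - C i)) s).sum := by
    rw [← Multiset.map_map]
    exact map_multiset_sum (evalRingHom z) _
  rw [hev]
  have hcong : Multiset.map ((evalRingHom z) ∘ fun i => (Multiset.map (fun a => X - C a) (s.erase i)).prod * derivative (X - C i)) s
      = Multiset.map (fun r => P * (z - r)⁻¹) s := by
    refine Multiset.map_congr rfl fun r hr => ?_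
    simp only [Function.comp_apply, derivative_sub, derivative_X, derivative_C, sub_zero,
      mul_one, map_multiset_prod, Multiset.map_map]
    rw [← key r hr]
    congr 1
    refine Multiset.map_congr rfl fun x _ => ?_
    simp [coe_evalRingHom]
  rw [hcong, Multiset.sum_map_mul_left, hevalfac, mul_assoc]

/-- Turán's inequality for the closed unit disk. -/
theorem turan_disk (n : ℕ) (hn : 1 ≤ n) (p : Polynomial ℂ)
    (hdeg : p.natDegree = n)
    (hroots : ∀ z : ℂ, p.IsRoot z → z ∈ closedBall (0 : ℂ) 1) :
    ((n : ℝ) / 2) * sSup ((fun z => ‖p.eval z‖) '' closedBall (0 : ℂ) 1)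
      ≤ sSup ((fun z => ‖(Polynomial.derivative p).eval z‖) '' closedBall (0 : ℂ) 1) := by
  classical
  set K : Set ℂ := closedBall (0 : ℂ) 1 with hK
  have hKc : IsCompact K := isCompact_closedBall _ _
  have hKne : K.Nonempty := ⟨0, by simp [hK]⟩
  set f : ℂ → ℝ := fun z => ‖p.eval z‖ with hf
  set g : ℂ → ℝ := fun z => ‖(derivative p).eval z‖ with hg
  have hfc : ContinuousOn f K := (continuous_norm.comp (p.continuous_aeval)).continuousOn
  have hgc : ContinuousOn g K := (continuous_norm.comp ((derivative p).continuous_aeval)).continuousOn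
  have hgbdd : BddAbove (g '' K) := (hKc.image_of_continuousOn hgc).bddAbove
  obtain ⟨z₁, hz₁K, hsup, hmax⟩ := hKc.exists_sSup_image_eq_and_ge hKne hfc
  rw [hsup]
  set M : ℝ := f z₁ with hM
  rcases eq_or_lt_of_le (show (0:ℝ) ≤ M from norm_nonneg (p.eval z₁)) with hM0 | hM0
  · rw [← hM0, mul_zero]
    exact le_csSup_of_le hgbdd ⟨0, by simp [hK], rfl⟩ (norm_nonneg _)
  -- boundary max point
  obtain ⟨z₀, hz₀s, hz₀max⟩ := (isCompact_sphere (0:ℂ) 1).exists_isMaxOn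
    ⟨1, by simp⟩ (hfc.mono sphere_subset_closedBall)
  have habs : ‖z₀‖ = 1 := by
    have := mem_sphere_iff_norm.1 hz₀s
    simpa using this
  have hmaxmod : f z₁ ≤ f z₀ := by
    have h := Complex.norm_le_of_forall_mem_frontier_norm_le (U := ball (0:ℂ) 1)
      (f := fun z => p.eval z) isBounded_ball
      ((p.differentiable).diffContOnCl) (C := f z₀) ?_ (z := z₁) ?_
    · simpa [hf] using h
    · rw [frontier_ball (0:ℂ) one_ne_zero]
      intro w hw
      simpa using hz₀max hw
    · rw [closure_ball (0:ℂ) one_ne_zero]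
      exact hz₁K
  have hz₀K : z₀ ∈ K := sphere_subset_closedBall hz₀s
  have hfz₀ : f z₀ = M := le_antisymm (hmax z₀ hz₀K) hmaxmod
  have hpz₀ : p.eval z₀ ≠ 0 := by
    intro h
    rw [hf] at hfz₀
    simp only [h, norm_zero] at hfz₀
    exact absurd hfz₀ (ne_of_gt hM0).symm
  have hld := log_deriv p z₀ hpz₀
  set S : ℂ := (p.roots.map fun r => (z₀ - r)⁻¹).sum with hS
  have hcard : p.roots.card = n := by
    rw [← hdeg]
    exact splits_iff_card_roots.1 (IsAlgClosed.splits p)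
  have hre : (n:ℝ)/2 ≤ (z₀ * S).re := by
    have h1 : z₀ * S = (p.roots.map fun r => z₀ * (z₀ - r)⁻¹).sum :=
      (Multiset.sum_map_mul_left).symm
    rw [h1]
    have h2 : ((p.roots.map fun r => z₀ * (z₀ - r)⁻¹).sum).re
        = ((p.roots.map fun r => z₀ * (z₀ - r)⁻¹).map Complex.reAddGroupHom).sum :=
      map_multiset_sum Complex.reAddGroupHom _
    rw [h2]
    have h3 := Multiset.card_nsmul_le_sum
      (s := (p.roots.map fun r => z₀ * (z₀ - r)⁻¹).map Complex.reAddGroupHom)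
      (a := (1:ℝ)/2) ?_
    · rw [Multiset.card_map, Multiset.card_map, hcard, nsmul_eq_mul] at h3
      calc (n:ℝ)/2 = (n:ℝ) * (1/2) := by ring
        _ ≤ _ := h3
    · intro x hx
      rw [Multiset.map_map] at hx
      obtain ⟨r, hr, rfl⟩ := Multiset.mem_map.1 hx
      have hrK : r ∈ K := hroots r (isRoot_of_mem_roots hr)
      have hr1 : ‖r‖ ≤ 1 := by
        have := mem_closedBall_iff_norm.1 hrK
        simpa using this
      have hzr : z₀ - r ≠ 0 := by
        intro h0
        exact hpz₀ ((sub_eq_zero.1 h0) ▸ isRoot_of_mem_roots hr)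
      exact half_le_re z₀ r habs hr1 hzr
  have hSabs : (n:ℝ)/2 ≤ ‖S‖ := by
    calc (n:ℝ)/2 ≤ (z₀ * S).re := hre
      _ ≤ ‖z₀ * S‖ := Complex.re_le_norm _
      _ = ‖z₀‖ * ‖S‖ := norm_mul _ _
      _ = ‖S‖ := by rw [habs, one_mul]
  have hgz₀ : (n:ℝ)/2 * M ≤ g z₀ := by
    have : g z₀ = M * ‖S‖ := by
      rw [hg]
      simp only [hld, norm_mul]
      rw [← hfz₀, hf]
    rw [this, mul_comm]
    exact mul_le_mul_of_nonneg_left hSabs (le_of_lt hM0)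
  exact hgz₀.trans (le_csSup hgbdd ⟨z₀, hz₀K, rfl⟩)
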